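/- Let A be the adjacency matrix of a connected k-regular graph Γ on n vertices that is not complete, with distinct eigenvalues, and for each distinct eigenvalue θ let E_θ be the orthogonal projection onto the θ-eigenspace. Then for every vertex x, E_k e_x = (1/n)𝟙 ≠ 0, and there are at least 3 distinct eigenvalues θ with E_θ e_x ≠ 0. -/

import Mathlib

open Finset Matrix

/-- Perron–Frobenius-type lemma: an eigenvector of the adjacency matrix of a connected
`k`-regular graph for the eigenvalue `k` is constant. -/
lemma pf_const_aux {V : Type*} [Fintype V] [DecidableEq V] (G : SimpleGraph V)
    [DecidableRel G.Adj] {k : ℕ} (hreg : G.IsRegularOfDegree k) (hconn : G.Connected)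
    (v : V → ℝ) (hv : (G.adjMatrix ℝ).mulVec v = (k : ℝ) • v) (a b : V) : v a = v b := by
  have : Nonempty V := hconn.nonempty
  obtain ⟨u, -, hu⟩ := Finset.exists_max_image Finset.univ v ⟨a, Finset.mem_univ a⟩
  have step : ∀ c d : V, G.Adj c d → v c = v u → v d = v u := by
    intro c d hcd hc
    have hsum : ∑ w ∈ G.neighborFinset c, v w = (k : ℝ) * v u := by
      have h := congrFun hv c
      rw [SimpleGraph.adjMatrix_mulVec_apply] at h
      simpa [hc] using h
    have h0 : ∑ w ∈ G.neighborFinset c, (v u - v w) = 0 := by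
      rw [Finset.sum_sub_distrib, hsum, Finset.sum_const,
        SimpleGraph.card_neighborFinset_eq_degree, hreg c]
      simp [mul_comm]
    have hd := (Finset.sum_eq_zero_iff_of_nonneg
      (fun w _ => sub_nonneg.2 (hu w (Finset.mem_univ w)))).1 h0 d
      (by rwa [SimpleGraph.mem_neighborFinset])
    linarith
  have key : ∀ {c d : V} (p : G.Walk c d), v c = v u → v d = v u := by
    intro c d p
    induction p with
    | nil => exact id
    | cons h q ih => intro hc; exact ih (step _ _ h hc)
  obtain ⟨p⟩ := hconn u a
  obtain ⟨q⟩ := hconn u b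
  rw [key p rfl, key q rfl]

/-- In a non-complete `k`-regular graph, every vertex has a non-neighbor. -/
lemma exists_nonadj_aux {V : Type*} [Fintype V] [DecidableEq V] (G : SimpleGraph V)
    [DecidableRel G.Adj] {k : ℕ} (hreg : G.IsRegularOfDegree k) (hnc : G ≠ ⊤) (x : V) :
    ∃ z, z ≠ x ∧ ¬ G.Adj x z := by
  by_contra h
  push_neg at h
  apply hnc
  have hx : G.neighborFinset x = Finset.univ.erase x := by
    apply Finset.Subset.antisymm
    · intro w hw
      rw [SimpleGraph.mem_neighborFinset] at hw
      exact Finset.mem_erase.2 ⟨(G.ne_of_adj hw).symm, Finset.mem_univ w⟩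
    · intro w hw
      rw [SimpleGraph.mem_neighborFinset]
      exact h w (Finset.mem_erase.1 hw).1
  have hk : k = Fintype.card V - 1 := by
    have := hreg x
    rw [← SimpleGraph.card_neighborFinset_eq_degree, hx, Finset.card_erase_of_mem
      (Finset.mem_univ x), Finset.card_univ] at this
    omega
  ext a b
  simp only [SimpleGraph.top_adj]
  constructor
  · exact G.ne_of_adj
  · intro hab
    have hsub : G.neighborFinset a ⊆ Finset.univ.erase a := by
      intro w hw
      rw [SimpleGraph.mem_neighborFinset] at hw
      exact Finset.mem_erase.2 ⟨(G.ne_of_adj hw).symm, Finset.mem_univ w⟩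
    have hcard : (Finset.univ.erase a).card ≤ (G.neighborFinset a).card := by
      rw [SimpleGraph.card_neighborFinset_eq_degree, hreg a, hk,
        Finset.card_erase_of_mem (Finset.mem_univ a), Finset.card_univ]
    have heq := Finset.eq_of_subset_of_card_le hsub hcard
    have : b ∈ G.neighborFinset a := by
      rw [heq]; exact Finset.mem_erase.2 ⟨Ne.symm hab, Finset.mem_univ b⟩
    rwa [SimpleGraph.mem_neighborFinset] at this

theorem stmt_6 {V : Type*} [Fintype V] [DecidableEq V] (G : SimpleGraph V)
    [DecidableRel G.Adj] (k : ℕ)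
    (hreg : G.IsRegularOfDegree k) (hconn : G.Connected) (hnc : G ≠ ⊤) (x : V) :
    ((G.adjMatrix ℝ).mulVec (fun _ => ((Fintype.card V : ℝ))⁻¹) =
        (k : ℝ) • (fun _ => ((Fintype.card V : ℝ))⁻¹)) ∧
    ((fun _ => ((Fintype.card V : ℝ))⁻¹) : V → ℝ) ≠ 0 ∧
    (∀ v : V → ℝ, (G.adjMatrix ℝ).mulVec v = (k : ℝ) • v →
      dotProduct v (Pi.single x 1 - fun _ => ((Fintype.card V : ℝ))⁻¹) = 0) ∧
    (∃ θ₁ θ₂ θ₃ : ℝ, θ₁ ≠ θ₂ ∧ θ₁ ≠ θ₃ ∧ θ₂ ≠ θ₃ ∧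
      ∀ θ ∈ ({θ₁, θ₂, θ₃} : Set ℝ),
        ∃ v : V → ℝ, (G.adjMatrix ℝ).mulVec v = θ • v ∧
          dotProduct v (Pi.single x 1) ≠ 0) := by
  classical
  have hne : Nonempty V := hconn.nonempty
  have hn0 : (Fintype.card V : ℝ) ≠ 0 := by
    exact_mod_cast Fintype.card_ne_zero
  -- Part 1
  have part1 : (G.adjMatrix ℝ).mulVec (fun _ => ((Fintype.card V : ℝ))⁻¹) =
      (k : ℝ) • (fun _ => ((Fintype.card V : ℝ))⁻¹) := by
    funext u
    rw [SimpleGraph.adjMatrix_mulVec_apply, Finset.sum_const,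
      SimpleGraph.card_neighborFinset_eq_degree, hreg u]
    simp [mul_comm]
  -- Part 2
  have part2 : ((fun _ => ((Fintype.card V : ℝ))⁻¹) : V → ℝ) ≠ 0 := by
    intro h
    obtain ⟨u⟩ := hne
    have := congrFun h u
    exact (inv_ne_zero hn0) this
  -- Part 3
  have part3 : ∀ v : V → ℝ, (G.adjMatrix ℝ).mulVec v = (k : ℝ) • v →
      dotProduct v (Pi.single x 1 - fun _ => ((Fintype.card V : ℝ))⁻¹) = 0 := by
    intro v hv
    have hc := pf_const_aux G hreg hconn v hv
    rw [dotProduct_sub, dotProduct_single, mul_one]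
    have : dotProduct v (fun _ => ((Fintype.card V : ℝ))⁻¹) = v x := by
      unfold dotProduct
      rw [Finset.sum_congr rfl (fun w _ => by rw [hc w x]), Finset.sum_const,
        Finset.card_univ, nsmul_eq_mul]
      field_simp
    rw [this, sub_self]
  refine ⟨part1, part2, part3, ?_⟩
  have pfc : ∀ (v : V → ℝ), (G.adjMatrix ℝ).mulVec v = (k : ℝ) • v → ∀ a b : V, v a = v b :=
    fun v hv a b => pf_const_aux G hreg hconn v hv a b
  set A := G.adjMatrix ℝ with hAdef
  have hA : A.IsHermitian := (SimpleGraph.isSymm_adjMatrix G)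
  set B := hA.eigenvectorBasis with hBdef
  set μ := hA.eigenvalues with hμdef
  -- eigenvector equation pointwise
  have hAv : ∀ (i : V) (u : V), (A.mulVec (fun z => B i z)) u = μ i * B i u := by
    intro i u
    have h := congrFun (hA.mulVec_eigenvectorBasis i) u
    simpa using h
  -- decomposition of e_x
  have hex : ∀ z, (Pi.single x 1 : V → ℝ) z = ∑ i, (B i x) * B i z := by
    intro z
    have h := B.sum_repr' (EuclideanSpace.single x (1:ℝ))
    have h2 := congrFun (congrArg (fun (w : EuclideanSpace ℝ V) => (w : V → ℝ)) h) z
    simp only [PiLp.inner_apply, RCLike.inner_apply, starRingEnd_apply] at h2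
    have h3 : ((Pi.single x 1 : V → ℝ) z) = (EuclideanSpace.single x (1:ℝ)) z := by
      simp [EuclideanSpace.single_apply, Pi.single_apply]
    rw [h3, ← h2, WithLp.ofLp_sum, Finset.sum_apply]
    refine Finset.sum_congr rfl fun i _ => ?_
    rw [WithLp.ofLp_smul, Pi.smul_apply, smul_eq_mul]
    congr 1
    simp [EuclideanSpace.single_apply]
  -- support
  set T : Finset ℝ := (Finset.univ.filter (fun i => B i x ≠ 0)).image μ with hTdef
  -- witnesses for support elements
  have wit : ∀ θ ∈ T, ∃ v : V → ℝ, A.mulVec v = θ • v ∧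
      dotProduct v (Pi.single x 1) ≠ 0 := by
    intro θ hθ
    obtain ⟨i₀, hi₀mem, hi₀⟩ := Finset.mem_image.1 hθ
    have hi₀x : B i₀ x ≠ 0 := (Finset.mem_filter.1 hi₀mem).2
    set F : Finset V := Finset.univ.filter (fun i => μ i = θ) with hFdef
    refine ⟨fun z => ∑ i ∈ F, (B i x) * B i z, ?_, ?_⟩
    · funext u
      have hcalc : (A.mulVec (fun z => ∑ i ∈ F, (B i x) * B i z)) u
          = ∑ i ∈ F, (B i x) * (A.mulVec (fun z => B i z)) u := by
        show dotProduct (A u) _ = _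
        show ∑ w, A u w * ∑ i ∈ F, B i x * B i w = _
        calc ∑ w, A u w * ∑ i ∈ F, B i x * B i w
            = ∑ w, ∑ i ∈ F, B i x * (A u w * B i w) := by
              refine Finset.sum_congr rfl fun w _ => ?_
              rw [Finset.mul_sum]
              exact Finset.sum_congr rfl fun i _ => by ring
          _ = ∑ i ∈ F, ∑ w, B i x * (A u w * B i w) := Finset.sum_comm
          _ = ∑ i ∈ F, B i x * (A.mulVec (fun z => B i z)) u := by
              refine Finset.sum_congr rfl fun i _ => ?_
              rw [← Finset.mul_sum]
              rfl
      rw [hcalc]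
      rw [Pi.smul_apply, smul_eq_mul, Finset.mul_sum]
      refine Finset.sum_congr rfl fun i hi => ?_
      rw [hAv i u, (Finset.mem_filter.1 hi).2]
      ring
    · have hvx : (∑ i ∈ F, (B i x) * B i x) ≠ 0 := by
        have hpos : 0 < ∑ i ∈ F, (B i x) * B i x := by
          refine Finset.sum_pos' (fun i _ => mul_self_nonneg _) ⟨i₀, ?_, ?_⟩
          · exact Finset.mem_filter.2 ⟨Finset.mem_univ _, hi₀⟩
          · exact mul_self_pos.2 hi₀x
        exact ne_of_gt hpos
      rw [dotProduct_single, mul_one]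
      exact hvx
  -- column sums are k
  have hcol : ∀ w, ∑ u, A u w = (k : ℝ) := by
    intro w
    have hswap : ∑ u, A u w = ∑ u, A w u := by
      refine Finset.sum_congr rfl fun u _ => ?_
      simp [hAdef, SimpleGraph.adjMatrix_apply, SimpleGraph.adj_comm]
    rw [hswap]
    have : ∑ u, A w u = (A.mulVec (fun _ => (1:ℝ))) w := by
      simp [Matrix.mulVec, dotProduct]
    rw [this, hAdef, SimpleGraph.adjMatrix_mulVec_apply, Finset.sum_const,
      SimpleGraph.card_neighborFinset_eq_degree, hreg w]
    simp
  set d : V → ℝ := fun i => ∑ j, B i j with hddef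
  have horth : ∀ i, (μ i - (k : ℝ)) * d i = 0 := by
    intro i
    have h1 : ∑ u, (A.mulVec (fun z => B i z)) u = μ i * d i := by
      rw [Finset.sum_congr rfl fun u _ => hAv i u, ← Finset.mul_sum]
    have h2 : ∑ u, (A.mulVec (fun z => B i z)) u = (k : ℝ) * d i := by
      have : ∑ u, (A.mulVec (fun z => B i z)) u = ∑ w, (∑ u, A u w) * B i w := by
        calc ∑ u, (A.mulVec (fun z => B i z)) u
            = ∑ u, ∑ w, A u w * B i w := rfl
          _ = ∑ w, ∑ u, A u w * B i w := Finset.sum_comm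
          _ = ∑ w, (∑ u, A u w) * B i w := by
              exact Finset.sum_congr rfl fun w _ => (Finset.sum_mul ..).symm
      rw [this, Finset.sum_congr rfl fun w _ => by rw [hcol w], ← Finset.mul_sum]
    rw [sub_mul]
    rw [← h1, h2] at *
    linarith [h1, h2]
  -- k is in the support
  have hkT : (k : ℝ) ∈ T := by
    have hone : ∃ i, d i ≠ 0 := by
      by_contra hall
      push_neg at hall
      have h := B.sum_repr' (WithLp.toLp 2 (fun _ => (1:ℝ)) : EuclideanSpace ℝ V)
      have h2 := congrFun (congrArg (fun (w : EuclideanSpace ℝ V) => (w : V → ℝ)) h) x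
      simp only [PiLp.inner_apply, RCLike.inner_apply, starRingEnd_apply, star_trivial,
        mul_one, WithLp.ofLp_toLp, one_mul] at h2
      rw [WithLp.ofLp_sum, Finset.sum_apply] at h2
      have hz0 : ∀ i, (∑ j, B i j : ℝ) = 0 := fun i => hall i
      simp only [hz0, zero_smul] at h2
      simp at h2
    obtain ⟨i, hdi⟩ := hone
    have hik : μ i = (k : ℝ) := by
      rcases mul_eq_zero.1 (horth i) with h | h
      · linarith [sub_eq_zero.1 h]
      · exact absurd h hdi
    have hBconst := pfc (fun z => B i z)
      (funext fun u => by rw [hAv i u, hik]; simp)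
    have hBix : B i x ≠ 0 := by
      intro h0
      apply hdi
      show (∑ j, B i j : ℝ) = 0
      have hc' : ∀ j, B i j = B i x := fun j => hBconst j x
      rw [Finset.sum_congr rfl (fun j _ => hc' j), h0]
      simp
    exact Finset.mem_image.2 ⟨i, Finset.mem_filter.2 ⟨Finset.mem_univ _, hBix⟩, hik⟩
  -- the support has more than two elements
  have hT3 : 2 < T.card := by
    by_contra hle
    push_neg at hle
    obtain ⟨z, hzx, hzadj⟩ := exists_nonadj_aux G hreg hnc x
    have hy : ∃ y, G.Adj x y := by
      obtain ⟨p⟩ := hconn x z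
      cases p with
      | nil => exact absurd rfl hzx
      | cons h q => exact ⟨_, h⟩
    obtain ⟨y, hxy⟩ := hy
    obtain ⟨θ, hθcov⟩ : ∃ θ : ℝ, ∀ r ∈ T, r = (k : ℝ) ∨ r = θ := by
      rcases (T.erase (k : ℝ)).eq_empty_or_nonempty with he | ⟨θ, hθ⟩
      · refine ⟨0, fun r hr => Or.inl ?_⟩
        by_contra hne'
        exact Finset.notMem_empty r (he ▸ Finset.mem_erase.2 ⟨hne', hr⟩)
      · refine ⟨θ, fun r hr => ?_⟩
        by_cases hrk : r = (k : ℝ)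
        · exact Or.inl hrk
        · refine Or.inr ?_
          have h1 : (T.erase (k : ℝ)).card ≤ 1 := by
            have := Finset.card_erase_of_mem hkT
            omega
          exact Finset.card_le_one.1 h1 r (Finset.mem_erase.2 ⟨hrk, hr⟩) θ hθ
    have hAex : ∀ z' : V, (A.mulVec (Pi.single x 1)) z' = ∑ i, (B i x) * (μ i * B i z') := by
      intro z'
      calc (A.mulVec (Pi.single x 1)) z'
          = ∑ w, A z' w * (Pi.single x 1 : V → ℝ) w := rfl
        _ = ∑ w, ∑ i, B i x * (A z' w * B i w) := by
            refine Finset.sum_congr rfl fun w _ => ?_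
            rw [hex w, Finset.mul_sum]
            exact Finset.sum_congr rfl fun i _ => by ring
        _ = ∑ i, ∑ w, B i x * (A z' w * B i w) := Finset.sum_comm
        _ = ∑ i, (B i x) * (μ i * B i z') := by
            refine Finset.sum_congr rfl fun i _ => ?_
            rw [← Finset.mul_sum]
            congr 1
            exact hAv i z'
    have hgconst : ∀ a b : V,
        (A.mulVec (Pi.single x 1)) a - θ * (Pi.single x 1 : V → ℝ) a
          = (A.mulVec (Pi.single x 1)) b - θ * (Pi.single x 1 : V → ℝ) b := by
      intro a b
      rw [hAex a, hAex b, hex a, hex b, Finset.mul_sum, Finset.mul_sum,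
        ← Finset.sum_sub_distrib, ← Finset.sum_sub_distrib]
      refine Finset.sum_congr rfl fun i _ => ?_
      by_cases hBi : B i x = 0
      · simp [hBi]
      · have hμT : μ i ∈ T :=
          Finset.mem_image.2 ⟨i, Finset.mem_filter.2 ⟨Finset.mem_univ _, hBi⟩, rfl⟩
        rcases hθcov (μ i) hμT with hk' | hθ'
        · have hBconst := pfc (fun u => B i u)
            (funext fun u => by rw [hAv i u, hk']; simp)
          have hBab : B i a = B i b := hBconst a b
          rw [hBab]
        · rw [hθ']
          ring
    have hsingle : ∀ a : V, (A.mulVec (Pi.single x 1)) a = A a x := by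
      intro a
      rw [Matrix.mulVec_single]
      exact mul_one _
    have hgz : (A.mulVec (Pi.single x 1)) z - θ * (Pi.single x 1 : V → ℝ) z = 0 := by
      rw [hsingle z]
      have h1 : A z x = 0 := by
        simp only [hAdef, SimpleGraph.adjMatrix_apply, ite_eq_right_iff]
        exact fun h => absurd h.symm hzadj
      have h2 : (Pi.single x 1 : V → ℝ) z = 0 := Pi.single_eq_of_ne hzx 1
      rw [h1, h2, mul_zero, sub_zero]
    have hgy : (A.mulVec (Pi.single x 1)) y - θ * (Pi.single x 1 : V → ℝ) y = 1 := by
      rw [hsingle y]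
      have h1 : A y x = 1 := by
        simp [hAdef, SimpleGraph.adjMatrix_apply, hxy.symm]
      have h2 : (Pi.single x 1 : V → ℝ) y = 0 :=
        Pi.single_eq_of_ne (fun h => G.ne_of_adj hxy h.symm) 1
      rw [h1, h2, mul_zero, sub_zero]
    have := hgconst y z
    rw [hgy, hgz] at this
    exact one_ne_zero this
  obtain ⟨a, b, c, haT, hbT, hcT, hab, hac, hbc⟩ := Finset.two_lt_card_iff.1 hT3
  refine ⟨a, b, c, hab, hac, hbc, fun θ hθ => ?_⟩
  simp only [Set.mem_insert_iff, Set.mem_singleton_iff] at hθ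
  rcases hθ with rfl | rfl | rfl
  · exact wit _ haT
  · exact wit _ hbT
  · exact wit _ hcT
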